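/- Let S = ℝ×(-1,1). Let Q be the set of all homeomorphisms h of S of the form h(x,y) = (λ(x,y), μ(y)), where μ is a strictly increasing homeomorphism of (-1,1), λ : S → ℝ is continuous, and for each y ∈ (-1,1) the map x ↦ λ(x,y) is a strictly increasing homeomorphism of ℝ. Let H' ⊆ Q be the subset of those h for which μ = id. Then H' is a strong deformation retract of Q (with the compact-open topology): the map F : Q × [0,1] → Q sending (h,t) to the homeomorphism (x,y) ↦ (λ(x,y), t·y + (1−t)·μ(y)) is continuous, F(h,0) = h for all h ∈ Q, F(h,1) ∈ H' for all h ∈ Q, and F(h,t) = h for all t ∈ [0,1] whenever h ∈ H'. -/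

import Mathlib

/-- The open strip `S = ℝ × (-1,1)`. -/
def Strip11 : Set (ℝ × ℝ) := Set.univ ×ˢ Set.Ioo (-1 : ℝ) 1

/-- `Q`: the homeomorphisms `h (x, y) = (λ (x, y), μ y)` of the open strip `S = ℝ × (-1,1)`,
where `μ` is a strictly increasing homeomorphism of `(-1,1)` and each `x ↦ λ (x, y)` is a
strictly increasing homeomorphism of `ℝ`; a subset of `C(S, S)`. -/
def Q11 : Set C(Strip11, Strip11) :=
  {h | (∃ e : Strip11 ≃ₜ Strip11, ∀ p : Strip11, e p = h p) ∧
    (∃ μ : ℝ → ℝ, StrictMonoOn μ (Set.Ioo (-1 : ℝ) 1) ∧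
      Set.BijOn μ (Set.Ioo (-1 : ℝ) 1) (Set.Ioo (-1 : ℝ) 1) ∧
      ∀ p : Strip11, ((h p : ℝ × ℝ)).2 = μ ((p : ℝ × ℝ).2)) ∧
    (∀ y : ℝ, ∀ hy : y ∈ Set.Ioo (-1 : ℝ) 1,
      StrictMono (fun x : ℝ =>
        ((h ⟨(x, y), Set.mk_mem_prod (Set.mem_univ x) hy⟩ : ℝ × ℝ)).1) ∧
      Function.Surjective (fun x : ℝ =>
        ((h ⟨(x, y), Set.mk_mem_prod (Set.mem_univ x) hy⟩ : ℝ × ℝ)).1))}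

/-- `H' ⊆ Q`: those `h ∈ Q` with `μ = id`, i.e. preserving the second coordinate. -/
def Hprime11 : Set C(Strip11, Strip11) :=
  {h | h ∈ Q11 ∧ ∀ p : Strip11, ((h p : ℝ × ℝ)).2 = (p : ℝ × ℝ).2}

open Set

/-- `H'` is a strong deformation retract of `Q` (compact-open topology): the map
`F` sending `(h, t)` to `(x, y) ↦ (λ (x, y), t·y + (1-t)·μ y)` is continuous, `F (h, 0) = h`,
`F (h, 1) ∈ H'`, and `F (h, t) = h` for all `t` whenever `h ∈ H'`. -/


-- convex combination stays in Ioo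
lemma convex_mem11 {t y z : ℝ} (ht : t ∈ Icc (0:ℝ) 1) (hy : y ∈ Ioo (-1:ℝ) 1)
    (hz : z ∈ Ioo (-1:ℝ) 1) : t * y + (1 - t) * z ∈ Ioo (-1:ℝ) 1 := by
  obtain ⟨ht0, ht1⟩ := ht
  obtain ⟨hy1, hy2⟩ := hy
  obtain ⟨hz1, hz2⟩ := hz
  constructor
  · rcases eq_or_lt_of_le ht0 with h | h
    · rw [← h]; ring_nf; linarith
    · nlinarith
  · rcases eq_or_lt_of_le ht0 with h | h
    · rw [← h]; ring_nf; linarith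
    · nlinarith

-- strict mono, bijective self-map of Ioo as an order iso of the subtype
noncomputable def iooIso {μ : ℝ → ℝ} (hm : StrictMonoOn μ (Ioo (-1:ℝ) 1))
    (hb : BijOn μ (Ioo (-1:ℝ) 1) (Ioo (-1:ℝ) 1)) :
    (Ioo (-1:ℝ) 1) ≃o (Ioo (-1:ℝ) 1) :=
  StrictMono.orderIsoOfSurjective (fun y => ⟨μ y, hb.mapsTo y.2⟩)
    (fun a b hab => Subtype.mk_lt_mk.2 (hm a.2 b.2 hab))
    (fun z => by
      obtain ⟨y, hy, hyz⟩ := hb.surjOn z.2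
      exact ⟨⟨y, hy⟩, Subtype.ext hyz⟩)

lemma iooIso_apply {μ : ℝ → ℝ} (hm : StrictMonoOn μ (Ioo (-1:ℝ) 1))
    (hb : BijOn μ (Ioo (-1:ℝ) 1) (Ioo (-1:ℝ) 1)) (y : Ioo (-1:ℝ) 1) :
    (iooIso hm hb y : ℝ) = μ y := rfl

lemma mono_bij_continuousOn {μ : ℝ → ℝ} (hm : StrictMonoOn μ (Ioo (-1:ℝ) 1))
    (hb : BijOn μ (Ioo (-1:ℝ) 1) (Ioo (-1:ℝ) 1)) : ContinuousOn μ (Ioo (-1:ℝ) 1) := by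
  rw [continuousOn_iff_continuous_restrict]
  have : (Ioo (-1:ℝ) 1).domRestrict μ =
      Subtype.val ∘ (iooIso hm hb).toHomeomorph := rfl
  rw [this]
  exact continuous_subtype_val.comp (iooIso hm hb).toHomeomorph.continuous

-- the deformed μ_t
lemma nu_strictMonoOn {μ : ℝ → ℝ} (hm : StrictMonoOn μ (Ioo (-1:ℝ) 1))
    {t : ℝ} (ht : t ∈ Icc (0:ℝ) 1) :
    StrictMonoOn (fun y => t * y + (1 - t) * μ y) (Ioo (-1:ℝ) 1) := by
  intro a ha b hb hab
  rcases eq_or_lt_of_le ht.1 with h | h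
  · have := hm ha hb hab
    simp only [← h]
    ring_nf
    nlinarith
  · have h1 : t * a < t * b := by nlinarith
    have h2 : (1 - t) * μ a ≤ (1 - t) * μ b :=
      mul_le_mul_of_nonneg_left (le_of_lt (hm ha hb hab)) (by linarith [ht.2])
    dsimp only
    linarith

lemma nu_mapsTo {μ : ℝ → ℝ} (hb : BijOn μ (Ioo (-1:ℝ) 1) (Ioo (-1:ℝ) 1))
    {t : ℝ} (ht : t ∈ Icc (0:ℝ) 1) :
    MapsTo (fun y => t * y + (1 - t) * μ y) (Ioo (-1:ℝ) 1) (Ioo (-1:ℝ) 1) :=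
  fun y hy => convex_mem11 ht hy (hb.mapsTo hy)

lemma nu_surjOn {μ : ℝ → ℝ} (hm : StrictMonoOn μ (Ioo (-1:ℝ) 1))
    (hb : BijOn μ (Ioo (-1:ℝ) 1) (Ioo (-1:ℝ) 1)) {t : ℝ} (ht : t ∈ Icc (0:ℝ) 1) :
    SurjOn (fun y => t * y + (1 - t) * μ y) (Ioo (-1:ℝ) 1) (Ioo (-1:ℝ) 1) := by
  intro v hv
  obtain ⟨hv1, hv2⟩ := hv
  have hv1' : (v + -1)/2 ∈ Ioo (-1:ℝ) 1 := ⟨by linarith, by linarith⟩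
  have hv2' : (v + 1)/2 ∈ Ioo (-1:ℝ) 1 := ⟨by linarith, by linarith⟩
  obtain ⟨c, hc, hcv⟩ := hb.surjOn hv1'
  obtain ⟨d, hd, hdv⟩ := hb.surjOn hv2'
  set a := min c ((v + -1)/2) with ha_def
  set b := max d ((v + 1)/2) with hb_def
  have haI : a ∈ Ioo (-1:ℝ) 1 := ⟨lt_min hc.1 hv1'.1, lt_of_le_of_lt (min_le_left _ _) hc.2⟩
  have hbI : b ∈ Ioo (-1:ℝ) 1 := ⟨lt_of_lt_of_le hd.1 (le_max_left _ _), max_lt hd.2 hv2'.2⟩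
  have hμa : μ a ≤ (v + -1)/2 := hcv ▸ hm.monotoneOn haI hc (min_le_left _ _)
  have hμb : (v + 1)/2 ≤ μ b := hdv ▸ hm.monotoneOn hd hbI (le_max_left _ _)
  have hav : a ≤ v := le_trans (min_le_right _ _) (by linarith)
  have hbv : v ≤ b := le_trans (by linarith : v ≤ (v+1)/2) (le_max_right _ _)
  have hab : a ≤ b := le_trans hav hbv
  have hsub : Icc a b ⊆ Ioo (-1:ℝ) 1 :=
    fun z hz => ⟨lt_of_lt_of_le haI.1 hz.1, lt_of_le_of_lt hz.2 hbI.2⟩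
  have hcont : ContinuousOn (fun y => t * y + (1 - t) * μ y) (Icc a b) :=
    ((continuousOn_const.mul continuousOn_id).add
      (continuousOn_const.mul ((mono_bij_continuousOn hm hb).mono hsub)))
  have hfa : t * a + (1 - t) * μ a ≤ v := by
    have h1 : t * a ≤ t * v := mul_le_mul_of_nonneg_left hav ht.1
    have h2 : (1 - t) * μ a ≤ (1 - t) * v :=
      mul_le_mul_of_nonneg_left (by linarith) (by linarith [ht.2])
    linarith
  have hfb : v ≤ t * b + (1 - t) * μ b := by
    have h1 : t * v ≤ t * b := mul_le_mul_of_nonneg_left hbv ht.1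
    have h2 : (1 - t) * v ≤ (1 - t) * μ b :=
      mul_le_mul_of_nonneg_left (by linarith) (by linarith [ht.2])
    linarith
  obtain ⟨y, hy, hyv⟩ := intermediate_value_Icc hab hcont ⟨hfa, hfb⟩
  exact ⟨y, hsub hy, hyv⟩

lemma isOpen_strip11 : IsOpen Strip11 := isOpen_univ.prod isOpen_Ioo

instance : LocallyCompactSpace Strip11 := isOpen_strip11.locallyCompactSpace

-- the strip splits as a product
def stripHomeo : Strip11 ≃ₜ ℝ × (Ioo (-1:ℝ) 1) where
  toFun p := ((p : ℝ × ℝ).1, ⟨(p : ℝ × ℝ).2, p.2.2⟩)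
  invFun q := ⟨(q.1, (q.2 : ℝ)), ⟨mem_univ _, q.2.2⟩⟩
  left_inv p := rfl
  right_inv q := rfl
  continuous_toFun := by
    exact (continuous_subtype_val.fst).prodMk
      ((continuous_subtype_val.snd).subtype_mk _)
  continuous_invFun := by
    exact (continuous_fst.prodMk (continuous_subtype_val.comp continuous_snd)).subtype_mk _

-- the deformation map on continuous maps
noncomputable def Fmap11 (h : C(Strip11, Strip11)) (t : Set.Icc (0:ℝ) 1) :
    C(Strip11, Strip11) where
  toFun p := ⟨(((h p : ℝ × ℝ)).1,
      (t : ℝ) * (p : ℝ × ℝ).2 + (1 - (t : ℝ)) * ((h p : ℝ × ℝ)).2),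
    ⟨mem_univ _, convex_mem11 t.2 p.2.2 (h p).2.2⟩⟩
  continuous_toFun := by
    have hc : Continuous fun p : Strip11 => (h p : ℝ × ℝ) :=
      continuous_subtype_val.comp h.continuous
    exact ((hc.fst).prodMk
      ((continuous_const.mul (continuous_subtype_val.snd)).add
        (continuous_const.mul hc.snd))).subtype_mk _

lemma Fmap11_mem (h : C(Strip11, Strip11)) (hh : h ∈ Q11) (t : Set.Icc (0:ℝ) 1) :
    Fmap11 h t ∈ Q11 := by
  obtain ⟨⟨e, he⟩, ⟨μ, hμmono, hμbij, hμeq⟩, hlam⟩ := hh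
  set ν : ℝ → ℝ := fun y => (t : ℝ) * y + (1 - (t : ℝ)) * μ y with hν_def
  have hνmono : StrictMonoOn ν (Ioo (-1:ℝ) 1) := nu_strictMonoOn hμmono t.2
  have hνbij : BijOn ν (Ioo (-1:ℝ) 1) (Ioo (-1:ℝ) 1) :=
    ⟨nu_mapsTo hμbij t.2, hνmono.injOn, nu_surjOn hμmono hμbij t.2⟩
  refine ⟨?_, ⟨ν, hνmono, hνbij, fun p => by simp [Fmap11, hν_def, hμeq p]⟩, fun y hy => hlam y hy⟩
  -- the homeomorphism witness
  · set χ : (Ioo (-1:ℝ) 1) ≃ₜ (Ioo (-1:ℝ) 1) :=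
      ((iooIso hμmono hμbij).symm.trans (iooIso hνmono hνbij)).toHomeomorph with hχ_def
    set σ : Strip11 ≃ₜ Strip11 :=
      (stripHomeo.trans ((Homeomorph.refl ℝ).prodCongr χ)).trans stripHomeo.symm with hσ_def
    refine ⟨e.trans σ, fun p => ?_⟩
    have hep : e p = h p := he p
    have key : χ ⟨(h p : ℝ × ℝ).2, (h p).2.2⟩ =
        ⟨(t : ℝ) * (p : ℝ × ℝ).2 + (1 - (t : ℝ)) * ((h p : ℝ × ℝ)).2,
          convex_mem11 t.2 p.2.2 (h p).2.2⟩ := by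
      have h1 : (⟨(h p : ℝ × ℝ).2, (h p).2.2⟩ : Ioo (-1:ℝ) 1) =
          iooIso hμmono hμbij ⟨(p : ℝ × ℝ).2, p.2.2⟩ := by
        apply Subtype.ext
        simp [iooIso_apply, hμeq p]
      rw [hχ_def]
      simp only [OrderIso.toHomeomorph, h1]
      apply Subtype.ext
      show (((iooIso hμmono hμbij).symm.trans (iooIso hνmono hνbij))
        (iooIso hμmono hμbij ⟨(p : ℝ × ℝ).2, p.2.2⟩) : ℝ) = _
      rw [OrderIso.trans_apply, OrderIso.symm_apply_apply]
      rw [iooIso_apply hνmono hνbij]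
      simp [hν_def, hμeq p]
    show σ (e p) = Fmap11 h t p
    rw [hep]
    apply Subtype.ext
    show ((stripHomeo.symm (((h p : ℝ × ℝ)).1, χ ⟨(h p : ℝ × ℝ).2, (h p).2.2⟩)) : ℝ × ℝ) = _
    rw [key]
    rfl


theorem stmt_11 :
    ∃ F : Q11 × Set.Icc (0 : ℝ) 1 → Q11,
      Continuous F ∧
      (∀ (h : Q11) (t : Set.Icc (0 : ℝ) 1) (p : Strip11),
        (((F (h, t) : C(Strip11, Strip11)) p : ℝ × ℝ)) =
          (((h : C(Strip11, Strip11)) p : ℝ × ℝ).1,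
            (t : ℝ) * (p : ℝ × ℝ).2 + (1 - (t : ℝ)) * ((h : C(Strip11, Strip11)) p : ℝ × ℝ).2)) ∧
      (∀ h : Q11, F (h, ⟨0, by norm_num⟩) = h) ∧
      (∀ h : Q11, (F (h, ⟨1, by norm_num⟩) : C(Strip11, Strip11)) ∈ Hprime11) ∧
      (∀ h : Q11, (h : C(Strip11, Strip11)) ∈ Hprime11 →
        ∀ t : Set.Icc (0 : ℝ) 1, F (h, t) = h) := by
  refine ⟨fun ht => ⟨Fmap11 ht.1 ht.2, Fmap11_mem ht.1 ht.1.2 ht.2⟩, ?_, ?_, ?_, ?_, ?_⟩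
  · apply Continuous.subtype_mk
    apply ContinuousMap.continuous_of_continuous_uncurry
    apply Continuous.subtype_mk
    have heval : Continuous fun x : (Q11 × Set.Icc (0:ℝ) 1) × Strip11 =>
        ((x.1.1 : C(Strip11, Strip11)) x.2 : ℝ × ℝ) := by
      apply continuous_subtype_val.comp
      exact ContinuousEval.continuous_eval.comp
        ((continuous_subtype_val.comp (continuous_fst.comp continuous_fst)).prodMk
          continuous_snd)
    have ht' : Continuous fun x : (Q11 × Set.Icc (0:ℝ) 1) × Strip11 => ((x.1.2 : ℝ)) :=
      continuous_subtype_val.comp (continuous_snd.comp continuous_fst)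
    have hp2 : Continuous fun x : (Q11 × Set.Icc (0:ℝ) 1) × Strip11 => (x.2 : ℝ × ℝ).2 :=
      (continuous_subtype_val.comp continuous_snd).snd
    exact (heval.fst).prodMk
      ((ht'.mul hp2).add (((continuous_const.sub ht').mul heval.snd)))
  · intro h t p; rfl
  · intro h
    apply Subtype.ext
    apply ContinuousMap.ext
    intro p
    apply Subtype.ext
    apply Prod.ext
    · rfl
    · show (0:ℝ) * _ + (1 - 0) * _ = _
      ring
  · intro h
    refine ⟨Fmap11_mem h h.2 _, fun p => ?_⟩
    show (1:ℝ) * _ + (1 - 1) * _ = _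
    ring
  · intro h hh t
    apply Subtype.ext
    apply ContinuousMap.ext
    intro p
    apply Subtype.ext
    apply Prod.ext
    · rfl
    · show (t:ℝ) * (p : ℝ × ℝ).2 + (1 - (t:ℝ)) * ((h : C(Strip11,Strip11)) p : ℝ × ℝ).2 = _
      rw [hh.2 p]
      ring
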